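/- Let T be a finite tree of order at least 3 and T* its associated twin-free tree (obtained by deleting all but one leaf from every maximal set of pairwise twin leaves). Then T and T* have the same radius. -/

import Mathlib

/-- `f` is a dominating `k`-broadcast on `G`: each value is at most `k`, and every
vertex `u` is `f`-dominated by some vertex `v` with `f v ≥ 1` and `d(u,v) ≤ f v`. -/
def IsDomKBroadcast {V : Type*} (G : SimpleGraph V) (k : ℕ) (f : V → ℕ) : Prop :=
  (∀ v, f v ≤ k) ∧ ∀ u, ∃ v, 1 ≤ f v ∧ G.Reachable u v ∧ G.dist u v ≤ f v

/-- The dominating `k`-broadcast number: minimum cost of a dominating `k`-broadcast. -/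
noncomputable def gammaBk {V : Type*} (G : SimpleGraph V) (k : ℕ) : ℕ :=
  sInf {c : ℕ | ∃ f : V → ℕ, IsDomKBroadcast G k f ∧ ∑ᶠ v, f v = c}

/-- The radius of a graph: the minimum eccentricity of a vertex. -/
noncomputable def grad {V : Type*} (G : SimpleGraph V) : ℕ :=
  sInf {e : ℕ | ∃ v : V, ∀ u : V, G.dist v u ≤ e}

/-- A leaf is a vertex of degree one, i.e. with a unique neighbor. -/
def IsLeaf {V : Type*} (G : SimpleGraph V) (u : V) : Prop := ∃! w, G.Adj u w

open SimpleGraph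

section Aux
variable {V : Type*} {T : SimpleGraph V}

/-- Distance from a leaf goes through its unique neighbor. -/
lemma leaf_dist (hc : T.Connected) {v w u : V} (hadj : T.Adj v w)
    (huniq : ∀ y, T.Adj v y → y = w) (hne : u ≠ v) :
    T.dist v u = T.dist w u + 1 := by
  have hr : T.Reachable v u := hc.preconnected v u
  obtain ⟨p, hp⟩ := hr.exists_walk_length_eq_dist
  have h3 : T.dist v u ≤ T.dist v w + T.dist w u := hc.dist_triangle
  have h4 : T.dist v w = 1 := dist_eq_one_iff_adj.mpr hadj
  cases p with
  | nil => exact absurd rfl hne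
  | @cons _ x _ h q =>
    have hx : w = x := (huniq _ h).symm
    subst hx
    have h2 := dist_le q
    simp only [Walk.length_cons] at hp
    omega

/-- An interior vertex of a path has two distinct neighbors. -/
lemma interior_two_nbrs : ∀ {a b : V} (p : T.Walk a b), p.IsPath →
    ∀ x ∈ p.support, x ≠ a → x ≠ b →
      ∃ y z, y ≠ z ∧ T.Adj x y ∧ T.Adj x z := by
  intro a b p
  induction p with
  | nil =>
    intro _ x hx hxa _
    simp only [Walk.support_nil, List.mem_singleton] at hx
    exact absurd hx hxa
  | @cons a c b h q ih =>
    intro hp x hx hxa hxb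
    rw [Walk.support_cons, List.mem_cons] at hx
    rcases hx with rfl | hx
    · exact absurd rfl hxa
    by_cases hxc : x = c
    · subst hxc
      cases q with
      | nil => exact absurd rfl hxb
      | @cons _ d _ h' q' =>
        have hna : a ∉ (Walk.cons h' q').support :=
          ((Walk.cons_isPath_iff _ _).mp hp).2
        refine ⟨a, d, ?_, h.symm, h'⟩
        rintro rfl
        exact hna (by simp [Walk.support_cons, Walk.start_mem_support])
    · exact ih hp.of_cons x hx hxc hxb

/-- Lift a walk whose support lies in `S` to the induced graph. -/
lemma lift_walk {S : Set V} : ∀ {a b : V} (p : T.Walk a b) (ha : a ∈ S) (hb : b ∈ S),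
    (∀ x ∈ p.support, x ∈ S) →
      ∃ q : (T.induce S).Walk ⟨a, ha⟩ ⟨b, hb⟩, q.length = p.length := by
  intro a b p
  induction p with
  | nil => intro ha hb _; exact ⟨Walk.nil, rfl⟩
  | @cons a c b h q ih =>
    intro ha hb hp
    have hc : c ∈ S := hp c (by simp)
    obtain ⟨q', hq'⟩ := ih hc hb (fun x hx => hp x (by simp [hx]))
    exact ⟨Walk.cons (by exact h) q', by exact congrArg (· + 1) hq'⟩

/-- Distances in the induced graph on `S` agree with those in a tree `T`,
provided `S` contains every non-leaf. -/
lemma induce_dist_eq {S : Set V} (hT : T.IsTree)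
    (hS1 : ∀ u, ¬ IsLeaf T u → u ∈ S) {a b : V} (ha : a ∈ S) (hb : b ∈ S) :
    (T.induce S).Reachable ⟨a, ha⟩ ⟨b, hb⟩ ∧
      (T.induce S).dist ⟨a, ha⟩ ⟨b, hb⟩ = T.dist a b := by
  obtain ⟨p, hpath, hlen⟩ := hT.isConnected.exists_path_of_dist a b
  have hsupp : ∀ x ∈ p.support, x ∈ S := by
    intro x hx
    by_cases hxa : x = a
    · exact hxa ▸ ha
    by_cases hxb : x = b
    · exact hxb ▸ hb
    obtain ⟨y, z, hyz, hy, hz⟩ := interior_two_nbrs p hpath x hx hxa hxb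
    refine hS1 x ?_
    rintro ⟨n, hn, hn2⟩
    exact hyz ((hn2 y hy).trans (hn2 z hz).symm)
  obtain ⟨q, hq⟩ := lift_walk p ha hb hsupp
  have hrS : (T.induce S).Reachable ⟨a, ha⟩ ⟨b, hb⟩ := ⟨q⟩
  refine ⟨hrS, le_antisymm (by rw [← hlen, ← hq]; exact dist_le q) ?_⟩
  obtain ⟨r, hr⟩ := hrS.exists_walk_length_eq_dist
  have := dist_le (r.map (Embedding.induce S).toHom)
  rwa [Walk.length_map, hr] at this

end Aux

theorem radius_twin_free {V : Type*} [Fintype V] (T : SimpleGraph V)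
    (hT : T.IsTree) (hcard : 3 ≤ Fintype.card V) (S : Set V)
    (hS1 : ∀ u, ¬ IsLeaf T u → u ∈ S)
    (hS2 : ∀ v, (∃ u, IsLeaf T u ∧ T.Adj u v) →
      ∃! u, IsLeaf T u ∧ T.Adj u v ∧ u ∈ S) :
    grad T = grad (T.induce S) := by
  classical
  have hc := hT.isConnected
  have hleaf : ∀ u, u ∉ S → IsLeaf T u := fun u hu => by
    by_contra h; exact hu (hS1 u h)
  have hthird : ∀ v w : V, ∃ x, x ≠ v ∧ x ≠ w := by
    intro v w
    by_contra hcon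
    push_neg at hcon
    have hsub : (Finset.univ : Finset V) ⊆ {v, w} := by
      intro x _
      rcases eq_or_ne x v with rfl | hx
      · simp
      · simp [hcon x hx]
    have h1 := Finset.card_le_card hsub
    have h2 : ({v, w} : Finset V).card ≤ 2 :=
      (Finset.card_insert_le _ _).trans (by simp)
    rw [Finset.card_univ] at h1
    omega
  have hsupp_nonleaf : ∀ v w, T.Adj v w → (∀ y, T.Adj v y → y = w) → ¬ IsLeaf T w := by
    intro v w hadj huniq hw
    obtain ⟨y, hy, hy2⟩ := hw
    have hyv : ∀ z, T.Adj w z → z = v := fun z hz =>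
      (hy2 z hz).trans (hy2 v hadj.symm).symm
    obtain ⟨x, hxv, hxw⟩ := hthird v w
    have e1 := leaf_dist hc hadj huniq hxv
    have e2 := leaf_dist hc hadj.symm hyv hxw
    omega
  have htwin : ∀ u, u ∉ S → ∃ w u'', w ∈ S ∧ u'' ∈ S ∧
      T.Adj u w ∧ (∀ y, T.Adj u y → y = w) ∧
      T.Adj u'' w ∧ (∀ y, T.Adj u'' y → y = w) := by
    intro u hu
    obtain ⟨w, hw, hwu⟩ := hleaf u hu
    have hwS : w ∈ S := hS1 w (hsupp_nonleaf u w hw hwu)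
    obtain ⟨u'', ⟨hu''l, hu''a, hu''S⟩, -⟩ := hS2 w ⟨u, hleaf u hu, hw⟩
    obtain ⟨y, hy, hy2⟩ := hu''l
    exact ⟨w, u'', hwS, hu''S, hw, hwu, hu''a,
      fun z hz => (hy2 z hz).trans (hy2 w hu''a).symm⟩
  haveI : Fintype ↥S := Fintype.ofFinite _
  have hnV : Nonempty V := Fintype.card_pos_iff.mp (by omega)
  obtain ⟨v0⟩ := hnV
  obtain ⟨z, hz⟩ : ∃ z, z ∈ S := by
    by_cases h0 : IsLeaf T v0
    · obtain ⟨w, hw, hwu⟩ := h0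
      exact ⟨w, hS1 w (hsupp_nonleaf v0 w hw hwu)⟩
    · exact ⟨v0, hS1 v0 h0⟩
  have hTne : {e : ℕ | ∃ v : V, ∀ u : V, T.dist v u ≤ e}.Nonempty :=
    ⟨Finset.univ.sup (T.dist z), z, fun u => Finset.le_sup (Finset.mem_univ u)⟩
  have hSne : {e : ℕ | ∃ v : ↥S, ∀ u : ↥S, (T.induce S).dist v u ≤ e}.Nonempty :=
    ⟨Finset.univ.sup ((T.induce S).dist ⟨z, hz⟩), ⟨z, hz⟩,
      fun u => Finset.le_sup (Finset.mem_univ u)⟩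
  unfold grad
  apply le_antisymm
  · -- grad T ≤ grad (induce S)
    obtain ⟨vS, hvS⟩ := Nat.sInf_mem hSne
    set e := sInf {e : ℕ | ∃ v : ↥S, ∀ u : ↥S, (T.induce S).dist v u ≤ e} with hedef
    apply Nat.sInf_le
    obtain ⟨v, hv⟩ := vS
    by_cases hvleaf : IsLeaf T v
    · -- the center of the induced graph is a (kept) leaf; use its support
      obtain ⟨w, hw, hwu⟩ := hvleaf
      have hwS : w ∈ S := hS1 w (hsupp_nonleaf v w hw hwu)
      have he1 : 1 ≤ e := by
        have h1 := hvS ⟨w, hwS⟩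
        have h2 := induce_dist_eq hT hS1 hv hwS
        have h3 : (T.induce S).dist ⟨v, hv⟩ ⟨w, hwS⟩ ≠ 0 := by
          rw [dist_ne_zero_iff_ne_and_reachable]
          exact ⟨by simp [hw.ne], h2.1⟩
        omega
      refine ⟨w, fun u => ?_⟩
      by_cases huv : u = v
      · subst huv
        have h1 : T.dist w u = 1 := by
          rw [dist_comm]; exact dist_eq_one_iff_adj.mpr hw
        omega
      · have hvu := leaf_dist hc hw hwu huv
        have c0 : T.dist v u = T.dist u v := dist_comm
        by_cases huS : u ∈ S
        · have h2 := (induce_dist_eq hT hS1 hv huS).2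
          have h1 := hvS ⟨u, huS⟩
          omega
        · obtain ⟨w', u'', hw'S, hu''S, ha1, ha2, ha3, ha4⟩ := htwin u huS
          by_cases hvu'' : u'' = v
          · subst hvu''
            have hww : w' = w := hwu _ ha3
            subst hww
            have h5 := leaf_dist hc ha1 ha2 (fun h => huS (h ▸ hw'S))
            rw [dist_self] at h5
            have c1 : T.dist u w' = T.dist w' u := dist_comm
            omega
          · have hvne : v ≠ u := fun h => huS (h ▸ hv)
            have hvne'' : v ≠ u'' := fun h => hvu'' h.symm
            have E1 := leaf_dist hc ha1 ha2 hvne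
            have E2 := leaf_dist hc ha3 ha4 hvne''
            have h1 := hvS ⟨u'', hu''S⟩
            have h2 := (induce_dist_eq hT hS1 hv hu''S).2
            have c1 : T.dist u v = T.dist v u := dist_comm
            have c2 : T.dist u'' v = T.dist v u'' := dist_comm
            omega
    · -- the center is not a leaf
      refine ⟨v, fun u => ?_⟩
      by_cases huS : u ∈ S
      · have h2 := (induce_dist_eq hT hS1 hv huS).2
        have h1 := hvS ⟨u, huS⟩
        omega
      · obtain ⟨w', u'', hw'S, hu''S, ha1, ha2, ha3, ha4⟩ := htwin u huS
        have hvne : v ≠ u := fun h => huS (h ▸ hv)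
        have hvne'' : v ≠ u'' := fun h => hvleaf (h ▸ ⟨w', ha3, ha4⟩)
        have E1 := leaf_dist hc ha1 ha2 hvne
        have E2 := leaf_dist hc ha3 ha4 hvne''
        have h1 := hvS ⟨u'', hu''S⟩
        have h2 := (induce_dist_eq hT hS1 hv hu''S).2
        have c1 : T.dist u v = T.dist v u := dist_comm
        have c2 : T.dist u'' v = T.dist v u'' := dist_comm
        omega
  · -- grad (induce S) ≤ grad T
    obtain ⟨v, hv⟩ := Nat.sInf_mem hTne
    apply Nat.sInf_le
    by_cases hvS : v ∈ S
    · exact ⟨⟨v, hvS⟩, fun u => by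
        rw [(induce_dist_eq hT hS1 hvS u.2).2]; exact hv u⟩
    · obtain ⟨w, hw, hwu⟩ := hleaf v hvS
      have hwS := hS1 w (hsupp_nonleaf v w hw hwu)
      refine ⟨⟨w, hwS⟩, fun u => ?_⟩
      rw [(induce_dist_eq hT hS1 hwS u.2).2]
      have h1 := hv u
      have h2 := leaf_dist hc hw hwu (show (u : V) ≠ v from fun h => hvS (h ▸ u.2))
      omega
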